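/- Let T > 0, κ > 0, φ > 0 and A ≥ 0 with A < √(κφ). Set γ := √(φ/κ) and c := (√(κφ) + A)/(√(κφ) − A), and define θ₂ : [0,T] → ℝ by θ₂(t) = √(κφ)·(1 − c·e^{2γ(T−t)})/(1 + c·e^{2γ(T−t)}). Then θ₂ is differentiable on [0,T], satisfies the Riccati equation θ₂′(t) + (1/κ)·θ₂(t)² − φ = 0 for every t ∈ [0,T], and satisfies the terminal condition θ₂(T) = −A. -/

import Mathlib

/-- The explicit function θ₂ solves the Riccati equation
θ₂′(t) + (1/κ)·θ₂(t)² − φ = 0 on [0,T] with terminal condition θ₂(T) = −A. -/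
theorem stmt_0 (T κ φ A : ℝ) (hT : 0 < T) (hκ : 0 < κ) (hφ : 0 < φ)
    (hA : 0 ≤ A) (hA' : A < Real.sqrt (κ * φ))
    (γ c : ℝ) (hγ : γ = Real.sqrt (φ / κ))
    (hc : c = (Real.sqrt (κ * φ) + A) / (Real.sqrt (κ * φ) - A))
    (θ₂ : ℝ → ℝ)
    (hθ₂ : ∀ t, θ₂ t = Real.sqrt (κ * φ) * (1 - c * Real.exp (2 * γ * (T - t))) /
      (1 + c * Real.exp (2 * γ * (T - t)))) :
    (∀ t ∈ Set.Icc (0:ℝ) T, HasDerivWithinAt θ₂ (φ - (1 / κ) * (θ₂ t) ^ 2) (Set.Icc (0:ℝ) T) t)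
      ∧ θ₂ T = -A := by
  set s := Real.sqrt (κ * φ) with hs
  have hsq : s ^ 2 = κ * φ := Real.sq_sqrt (by positivity)
  have hspos : 0 < s := lt_of_le_of_lt hA hA'
  have hγpos : 0 < γ := by
    rw [hγ]; exact Real.sqrt_pos.mpr (by positivity)
  have hsγ : s * γ = φ := by
    rw [hγ, hs, ← Real.sqrt_mul (by positivity)]
    rw [show κ * φ * (φ / κ) = φ ^ 2 by field_simp]
    exact Real.sqrt_sq hφ.le
  have hsApos : 0 < s - A := sub_pos.mpr hA'
  have hcpos : 0 < c := by
    rw [hc]; exact div_pos (by linarith) hsApos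
  have hfun : θ₂ = fun t => s * (1 - c * Real.exp (2 * γ * (T - t))) /
      (1 + c * Real.exp (2 * γ * (T - t))) := funext hθ₂
  constructor
  · intro t ht
    have hEpos : 0 < Real.exp (2 * γ * (T - t)) := Real.exp_pos _
    have hDpos : 0 < 1 + c * Real.exp (2 * γ * (T - t)) := by positivity
    have h1 : HasDerivAt (fun x : ℝ => 2 * γ * (T - x)) (-(2 * γ)) t := by
      simpa using ((hasDerivAt_id t).const_sub T).const_mul (2 * γ)
    have hE : HasDerivAt (fun x : ℝ => Real.exp (2 * γ * (T - x)))
        (Real.exp (2 * γ * (T - t)) * -(2 * γ)) t := h1.exp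
    have hN : HasDerivAt (fun x : ℝ => s * (1 - c * Real.exp (2 * γ * (T - x))))
        (s * -(c * (Real.exp (2 * γ * (T - t)) * -(2 * γ)))) t :=
      ((hE.const_mul c).const_sub 1).const_mul s
    have hD : HasDerivAt (fun x : ℝ => 1 + c * Real.exp (2 * γ * (T - x)))
        (c * (Real.exp (2 * γ * (T - t)) * -(2 * γ))) t := by
      simpa using (hE.const_mul c).const_add 1
    have hdiv := hN.div hD hDpos.ne'
    rw [hθ₂ t, hfun]
    refine (hdiv.congr_deriv ?_).hasDerivWithinAt
    set E := Real.exp (2 * γ * (T - t))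
    field_simp
    linear_combination (4 * c * E * κ * (1 + c * E) ^ 2 - 8 * c ^ 2 * E ^ 2 * κ - 4 * c ^ 3 * E ^ 3 * κ) * hsγ +
      ((1 - c * E) ^ 2 * (1 + c * E) ^ 2 - 2 * c * E + 3 * c ^ 2 * E ^ 2 - c ^ 4 * E ^ 4) * hsq
  · have hE0 : Real.exp (2 * γ * (T - T)) = 1 := by simp
    rw [hθ₂ T, hE0, hc]
    field_simp
    ring
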